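/- Let h : [0,∞) → ℝ be infinitely differentiable on (0,∞) and continuous at 0, with h(0) = 0, lim_{D→∞} h(D) = 1, h'(D) > 0 for D > 0, and the Schoenberg sign pattern h^{(2r−1)} ≥ 0, h^{(2r)} ≤ 0 on (0,∞) for all r ≥ 1. Let x_1,...,x_n be distinct points of ℝ^p and f_1,...,f_n > 0 with Σ_i f_i = 1, and for δ > 0 define Γ_δ(a) = Σ_i f_i h(‖x_i − a‖²/δ). Then for every ε > 0 with 2ε < min_{i≠j} ‖x_i − x_j‖, there exists a finite δ₀ > 0 such that for every 0 < δ ≤ δ₀ and every index i, the function Γ_δ possesses a local minimizer a_i with ‖a_i − x_i‖ < ε; in particular Γ_δ has at least n distinct local minima. -/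

import Mathlib

open Finset Set Filter Topology

/-- **Theorem 4 (bounded transformations).** Let `h : [0,∞) → ℝ` be infinitely
differentiable on `(0,∞)`, continuous at `0`, with `h 0 = 0`, `h(∞) = 1`, `h' > 0` on
`(0,∞)` and the Schoenberg sign pattern on `(0,∞)`. Let `x 1, ..., x n` be distinct
points of `ℝ^p` with positive weights summing to `1`, and
`Γ_δ(a) = ∑ i, f i * h (‖x i - a‖²/δ)`. For every `ε > 0` with
`2ε < min_{i ≠ j} ‖x i - x j‖` there is a finite `δ₀ > 0` such that for every
`0 < δ ≤ δ₀` and every index `i`, `Γ_δ` has a local minimizer within distance `ε`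
of `x i`; in particular `Γ_δ` has at least `n` distinct local minima. -/
theorem bounded_transform_n_local_minima {p n : ℕ} (h : ℝ → ℝ)
    (hsmooth : ContDiffOn ℝ (⊤ : ℕ∞) h (Ioi 0))
    (hcont : ContinuousWithinAt h (Ici 0) 0)
    (h0 : h 0 = 0)
    (hinf : Tendsto h atTop (𝓝 1))
    (hpos : ∀ D : ℝ, 0 < D → 0 < iteratedDerivWithin 1 h (Ioi 0) D)
    (hsign : ∀ r : ℕ, 1 ≤ r → ∀ D : ℝ, 0 < D →
      0 ≤ iteratedDerivWithin (2 * r - 1) h (Ioi 0) D ∧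
        iteratedDerivWithin (2 * r) h (Ioi 0) D ≤ 0)
    (x : Fin n → EuclideanSpace ℝ (Fin p)) (hx : Function.Injective x)
    (f : Fin n → ℝ) (hf : ∀ i, 0 < f i) (hsum : ∑ i, f i = 1)
    (ε : ℝ) (hε : 0 < ε) (hsep : ∀ i j, i ≠ j → 2 * ε < ‖x i - x j‖) :
    ∃ δ₀ : ℝ, 0 < δ₀ ∧ ∀ δ : ℝ, 0 < δ → δ ≤ δ₀ → ∀ i,
      ∃ a : EuclideanSpace ℝ (Fin p), ‖a - x i‖ < ε ∧
        IsLocalMin (fun b => ∑ j, f j * h (‖x j - b‖ ^ 2 / δ)) a := by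
  rcases Nat.eq_zero_or_pos n with hn | hn
  · subst hn
    exact ⟨1, one_pos, fun δ _ _ i => i.elim0⟩
  -- continuity of h on [0, ∞)
  have hcontIci : ContinuousOn h (Ici 0) := by
    intro t ht
    rcases eq_or_lt_of_le (show (0:ℝ) ≤ t from ht) with ht0 | ht'
    · rw [← ht0]; exact hcont
    · exact ((hsmooth.continuousOn.continuousAt
        (isOpen_Ioi.mem_nhds ht')).continuousWithinAt)
  -- h is strictly monotone on [0, ∞)
  have hderiv : ∀ D : ℝ, D ∈ interior (Ici (0:ℝ)) → 0 < deriv h D := by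
    intro D hD
    rw [interior_Ici] at hD
    have := hpos D hD
    rwa [iteratedDerivWithin_one,
      derivWithin_of_isOpen isOpen_Ioi hD] at this
  have hmono : MonotoneOn h (Ici 0) :=
    (strictMonoOn_of_deriv_pos (convex_Ici 0) hcontIci hderiv).monotoneOn
  -- h ≤ 1 on [0, ∞)
  have hle1 : ∀ t : ℝ, 0 ≤ t → h t ≤ 1 := by
    intro t ht
    refine ge_of_tendsto hinf ?_
    filter_upwards [eventually_ge_atTop t] with s hs
    exact hmono ht (ht.trans hs) hs
  -- minimum weight
  obtain ⟨i₀, -, hi₀⟩ := Finset.exists_min_image Finset.univ f ⟨⟨0, hn⟩, mem_univ _⟩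
  set m := f i₀ with hm
  have hm0 : 0 < m := hf i₀
  -- threshold
  obtain ⟨T, hT⟩ := eventually_atTop.mp (hinf.eventually
    (eventually_gt_nhds (show 1 - m / 2 < 1 by linarith)))
  set T' := max T 1 with hT'
  have hT'pos : (0:ℝ) < T' := lt_of_lt_of_le one_pos (le_max_right _ _)
  refine ⟨ε ^ 2 / T', div_pos (by positivity) hT'pos, fun δ hδ hδ0 i => ?_⟩
  set Γ : EuclideanSpace ℝ (Fin p) → ℝ := fun b => ∑ j, f j * h (‖x j - b‖ ^ 2 / δ) with hΓ
  -- existence of a minimizer on the closed ball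
  have hK : IsCompact (Metric.closedBall (x i) ε) := isCompact_closedBall _ _
  have hcontΓ : ContinuousOn Γ (Metric.closedBall (x i) ε) := by
    apply continuousOn_finset_sum
    intro j _
    apply ContinuousOn.mul continuousOn_const
    refine hcontIci.comp ?_ ?_
    · exact (((continuous_const.sub continuous_id).norm.pow 2).div_const δ).continuousOn
    · intro b _
      exact div_nonneg (sq_nonneg _) hδ.le
  obtain ⟨a, haK, hmin⟩ := hK.exists_isMinOn ⟨x i, Metric.mem_closedBall_self hε.le⟩ hcontΓ
  have hmin' := isMinOn_iff.mp hmin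
  -- value at the center
  have hcen : Γ (x i) ≤ 1 - f i := by
    have hb : ∀ j ∈ Finset.univ, f j * h (‖x j - x i‖ ^ 2 / δ) ≤
        (if j = i then 0 else f j) := by
      intro j _
      by_cases hji : j = i
      · simp [hji, h0]
      · simp only [hji, if_false]
        have h1 := hle1 _ (div_nonneg (sq_nonneg (‖x j - x i‖)) hδ.le)
        nlinarith [(hf j).le]
    calc Γ (x i) ≤ ∑ j, (if j = i then 0 else f j) := Finset.sum_le_sum hb
      _ = ∑ j, (f j - if j = i then f j else 0) := by
          apply Finset.sum_congr rfl; intro j _; split_ifs <;> simp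
      _ = 1 - f i := by
          rw [Finset.sum_sub_distrib, hsum, Finset.sum_ite_eq' Finset.univ i f]
          simp
  -- minimizer is in the open ball
  have hball : dist a (x i) < ε := by
    by_contra hge
    have heq : dist a (x i) = ε :=
      le_antisymm (Metric.mem_closedBall.mp haK) (not_lt.mp hge)
    have hterm : ∀ j ∈ Finset.univ, f j * (1 - m / 2) ≤ f j * h (‖x j - a‖ ^ 2 / δ) := by
      intro j _
      have hdist : ε ≤ ‖x j - a‖ := by
        by_cases hji : j = i
        · subst hji
          rw [show ‖x j - a‖ = dist a (x j) by rw [dist_eq_norm, norm_sub_rev], heq]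
        · have h1 := hsep j i hji
          have h2 : ‖x j - x i‖ ≤ ‖x j - a‖ + ‖a - x i‖ := by
            have := norm_add_le (x j - a) (a - x i)
            rwa [sub_add_sub_cancel] at this
          have h3 : ‖a - x i‖ = ε := by rw [← dist_eq_norm]; exact heq
          linarith
      have hDT : T ≤ ‖x j - a‖ ^ 2 / δ := by
        have h1 : ε ^ 2 ≤ ‖x j - a‖ ^ 2 := by nlinarith
        have h2 : δ * T' ≤ ε ^ 2 := (le_div_iff₀ hT'pos).mp hδ0
        have h3 : T' ≤ ε ^ 2 / δ := (le_div_iff₀ hδ).mpr (by nlinarith)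
        have h4 : ε ^ 2 / δ ≤ ‖x j - a‖ ^ 2 / δ := by gcongr
        calc T ≤ T' := le_max_left _ _
          _ ≤ ε ^ 2 / δ := h3
          _ ≤ ‖x j - a‖ ^ 2 / δ := h4
      have h5 := hT _ hDT
      nlinarith [(hf j).le]
    have hlow : 1 - m / 2 ≤ Γ a := by
      calc 1 - m / 2 = ∑ j, f j * (1 - m / 2) := by
            rw [← Finset.sum_mul, hsum, one_mul]
        _ ≤ Γ a := Finset.sum_le_sum hterm
    have hmi : m ≤ f i := hi₀ i (mem_univ i)
    have hc := hmin' (x i) (Metric.mem_closedBall_self hε.le)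
    linarith
  refine ⟨a, ?_, ?_⟩
  · rwa [show ‖a - x i‖ = dist a (x i) from dist_eq_norm a (x i) ▸ rfl]
  · exact hmin.isLocalMin (Filter.mem_of_superset
      (Metric.isOpen_ball.mem_nhds (Metric.mem_ball.mpr hball)) Metric.ball_subset_closedBall)
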